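/- Let G = U S Vᵀ be the full SVD of a d×d matrix G, let η > 0, A_0 ∈ ℝ^{d×r}, and B_0 = 0. Define Z_t = H^t [A_0; 0] where H = [[I_d, ηG],[ηGᵀ, I_d]], writing Z_t = [A_t; B_tᵀ]. Then A_t = (1/2) U((I + ηS)^t + (I − ηS)^t) Uᵀ A_0 and B_tᵀ = (1/2) V((I + ηS)^t − (I − ηS)^t) Uᵀ A_0. -/

import Mathlib

open Matrix

private lemma pow_key_add {R : Type*} [Ring R] (s : R) (t : ℕ) :
    (1 + s) ^ (t + 1) + (1 - s) ^ (t + 1) =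
      ((1 + s) ^ t + (1 - s) ^ t) + s * ((1 + s) ^ t - (1 - s) ^ t) := by
  have h1 : Commute s ((1 + s) ^ t) :=
    (((Commute.one_right s).add_right (Commute.refl s))).pow_right t
  have h2 : Commute s ((1 - s) ^ t) :=
    (((Commute.one_right s).sub_right (Commute.refl s))).pow_right t
  rw [pow_succ, pow_succ, mul_add, mul_sub, mul_one, mul_one, ← h1.eq, ← h2.eq, mul_sub]
  abel

private lemma pow_key_sub {R : Type*} [Ring R] (s : R) (t : ℕ) :
    (1 + s) ^ (t + 1) - (1 - s) ^ (t + 1) =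
      ((1 + s) ^ t - (1 - s) ^ t) + s * ((1 + s) ^ t + (1 - s) ^ t) := by
  have h1 : Commute s ((1 + s) ^ t) :=
    (((Commute.one_right s).add_right (Commute.refl s))).pow_right t
  have h2 : Commute s ((1 - s) ^ t) :=
    (((Commute.one_right s).sub_right (Commute.refl s))).pow_right t
  rw [pow_succ, pow_succ, mul_add, mul_sub, mul_one, mul_one, ← h1.eq, ← h2.eq, mul_add]
  abel

/-- Closed form of the linear (power-method) dynamics of the stacked LoRA iterate. -/
theorem linear_dynamics_closed_form {d r : ℕ}
    (G U S V : Matrix (Fin d) (Fin d) ℝ) (η : ℝ) (hη : 0 < η)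
    (hU : U * Uᵀ = 1) (hU' : Uᵀ * U = 1)
    (hV : V * Vᵀ = 1) (hV' : Vᵀ * V = 1)
    (hSdiag : ∀ i j, i ≠ j → S i j = 0) (hSnn : ∀ i, 0 ≤ S i i)
    (hG : G = U * S * Vᵀ)
    (A0 : Matrix (Fin d) (Fin r) ℝ) (t : ℕ) :
    letI H : Matrix (Fin d ⊕ Fin d) (Fin d ⊕ Fin d) ℝ :=
      Matrix.fromBlocks 1 (η • G) (η • Gᵀ) 1
    letI Z : Matrix (Fin d ⊕ Fin d) (Fin r) ℝ := H ^ t * Matrix.fromRows A0 0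
    (Z.submatrix Sum.inl id =
      (1 / 2 : ℝ) • (U * ((1 + η • S) ^ t + (1 - η • S) ^ t) * Uᵀ * A0)) ∧
    (Z.submatrix Sum.inr id =
      (1 / 2 : ℝ) • (V * ((1 + η • S) ^ t - (1 - η • S) ^ t) * Uᵀ * A0)) := by
  set H : Matrix (Fin d ⊕ Fin d) (Fin d ⊕ Fin d) ℝ :=
    Matrix.fromBlocks 1 (η • G) (η • Gᵀ) 1 with hH
  set s : Matrix (Fin d) (Fin d) ℝ := η • S with hs
  -- S is symmetric
  have hSsymm : Sᵀ = S := by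
    ext i j
    by_cases h : i = j
    · subst h; simp [Matrix.transpose_apply]
    · simp [Matrix.transpose_apply, hSdiag i j h, hSdiag j i (Ne.symm h)]
  have hGT : η • Gᵀ = V * s * Uᵀ := by
    rw [hG]
    simp [Matrix.transpose_mul, hSsymm, Matrix.smul_mul, Matrix.mul_smul, hs,
      Matrix.mul_assoc]
  have hGs : η • G = U * s * Vᵀ := by
    rw [hG]
    simp [Matrix.smul_mul, Matrix.mul_smul, hs]
  have key : ∀ n : ℕ,
      (H ^ n * Matrix.fromRows A0 (0 : Matrix (Fin d) (Fin r) ℝ) : Matrix (Fin d ⊕ Fin d) (Fin r) ℝ) =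
        Matrix.fromRows
          ((1 / 2 : ℝ) • (U * ((1 + s) ^ n + (1 - s) ^ n) * Uᵀ * A0))
          ((1 / 2 : ℝ) • (V * ((1 + s) ^ n - (1 - s) ^ n) * Uᵀ * A0)) := by
    intro n
    induction n with
    | zero =>
      simp only [pow_zero, Matrix.one_mul, sub_self]
      have h1 : (1 / 2 : ℝ) • (U * ((1 : Matrix (Fin d) (Fin d) ℝ) + 1) * Uᵀ * A0) = A0 := by
        rw [show (1 : Matrix (Fin d) (Fin d) ℝ) + 1 = (2 : ℝ) • 1 by simp [two_smul]]
        simp [Matrix.mul_smul, Matrix.smul_mul, hU, smul_smul]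
      rw [h1]
      simp
    | succ n ih =>
      rw [pow_succ', Matrix.mul_assoc, ih, hH, Matrix.fromBlocks_mul_fromRows]
      have e1 : U * s * Vᵀ * (V * ((1 + s) ^ n - (1 - s) ^ n) * Uᵀ * A0) =
          U * (s * ((1 + s) ^ n - (1 - s) ^ n)) * Uᵀ * A0 := by
        rw [show V * ((1 + s) ^ n - (1 - s) ^ n) * Uᵀ * A0 =
            V * (((1 + s) ^ n - (1 - s) ^ n) * (Uᵀ * A0)) by simp [Matrix.mul_assoc]]
        rw [show U * s * Vᵀ * (V * (((1 + s) ^ n - (1 - s) ^ n) * (Uᵀ * A0))) =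
            U * s * (Vᵀ * V) * (((1 + s) ^ n - (1 - s) ^ n) * (Uᵀ * A0)) by
          simp [Matrix.mul_assoc]]
        rw [hV']
        simp [Matrix.mul_assoc]
      have e2 : V * s * Uᵀ * (U * ((1 + s) ^ n + (1 - s) ^ n) * Uᵀ * A0) =
          V * (s * ((1 + s) ^ n + (1 - s) ^ n)) * Uᵀ * A0 := by
        rw [show U * ((1 + s) ^ n + (1 - s) ^ n) * Uᵀ * A0 =
            U * (((1 + s) ^ n + (1 - s) ^ n) * (Uᵀ * A0)) by simp [Matrix.mul_assoc]]
        rw [show V * s * Uᵀ * (U * (((1 + s) ^ n + (1 - s) ^ n) * (Uᵀ * A0))) =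
            V * s * (Uᵀ * U) * (((1 + s) ^ n + (1 - s) ^ n) * (Uᵀ * A0)) by
          simp [Matrix.mul_assoc]]
        rw [hU']
        simp [Matrix.mul_assoc]
      have htop : (1 : Matrix (Fin d) (Fin d) ℝ) *
            ((1 / 2 : ℝ) • (U * ((1 + s) ^ n + (1 - s) ^ n) * Uᵀ * A0)) +
          (η • G) * ((1 / 2 : ℝ) • (V * ((1 + s) ^ n - (1 - s) ^ n) * Uᵀ * A0)) =
          (1 / 2 : ℝ) • (U * ((1 + s) ^ (n + 1) + (1 - s) ^ (n + 1)) * Uᵀ * A0) := by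
        rw [Matrix.one_mul, Matrix.mul_smul, hGs, e1, ← smul_add, pow_key_add s n]
        congr 1
        simp [Matrix.add_mul, Matrix.mul_add]
      have hbot : (η • Gᵀ) *
            ((1 / 2 : ℝ) • (U * ((1 + s) ^ n + (1 - s) ^ n) * Uᵀ * A0)) +
          (1 : Matrix (Fin d) (Fin d) ℝ) *
            ((1 / 2 : ℝ) • (V * ((1 + s) ^ n - (1 - s) ^ n) * Uᵀ * A0)) =
          (1 / 2 : ℝ) • (V * ((1 + s) ^ (n + 1) - (1 - s) ^ (n + 1)) * Uᵀ * A0) := by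
        rw [Matrix.one_mul, Matrix.mul_smul, hGT, e2, ← smul_add, pow_key_sub s n,
          add_comm]
        congr 1
        simp [Matrix.add_mul, Matrix.mul_add, add_comm]
      rw [htop, hbot]
  constructor
  · ext i j
    have := congrFun (congrFun (key t) (Sum.inl i)) j
    simp at this
    simp only [Matrix.submatrix_apply, id, Matrix.smul_apply, smul_eq_mul, one_div]
    exact this
  · ext i j
    have := congrFun (congrFun (key t) (Sum.inr i)) j
    simp at this
    simp only [Matrix.submatrix_apply, id, Matrix.smul_apply, smul_eq_mul, one_div]
    exact this
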